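/- Given any finite directed graph G on vertex set [n] with no multiple edges such that every edge i → k satisfies i > k, the set of maximal orthogonal pairs of G, ordered by inclusion of the first component (equivalently, reverse inclusion of the second component), forms an extremal lattice of length n; join is computed by intersecting second components and meet by intersecting first components. -/
import Mathlib


/-- `(X, Y)` is an orthogonal pair for the directed graph `E` on `[n]`:
`X` and `Y` are disjoint and no edge goes from a vertex of `X` to one of `Y`. -/
def Orth (n : ℕ) (E : Fin n → Fin n → Prop) (X Y : Finset (Fin n)) : Prop :=
  Disjoint X Y ∧ ∀ i ∈ X, ∀ k ∈ Y, ¬ E i k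

/-- A maximal orthogonal pair: both components are maximal. -/
def MaxOrth (n : ℕ) (E : Fin n → Fin n → Prop)
    (p : Finset (Fin n) × Finset (Fin n)) : Prop :=
  Orth n E p.1 p.2 ∧
  (∀ X', p.1 ⊆ X' → Orth n E X' p.2 → X' = p.1) ∧
  (∀ Y', p.2 ⊆ Y' → Orth n E p.1 Y' → Y' = p.2)

/-- The set of maximal orthogonal pairs of `E`. -/
def MOP (n : ℕ) (E : Fin n → Fin n → Prop) :=
  {p : Finset (Fin n) × Finset (Fin n) // MaxOrth n E p}

/-- Maximal orthogonal pairs, ordered by inclusion of first components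
(equivalently, reverse inclusion of second components). -/
instance (n : ℕ) (E : Fin n → Fin n → Prop) : PartialOrder (MOP n E) where
  le a b := a.1.1 ⊆ b.1.1 ∧ b.1.2 ⊆ a.1.2
  le_refl a := ⟨subset_rfl, subset_rfl⟩
  le_trans a b c h1 h2 := ⟨h1.1.trans h2.1, h2.2.trans h1.2⟩
  le_antisymm a b h1 h2 := Subtype.ext
    (Prod.ext (subset_antisymm h1.1 h2.1) (subset_antisymm h2.2 h1.2))

/-- A join-irreducible element of a partial order: not minimal, and not the
least upper bound of two strictly smaller elements. -/
def OrderSupIrred {α : Type*} [PartialOrder α] (a : α) : Prop :=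
  ¬ IsMin a ∧ ∀ b c : α, IsLUB {b, c} a → b = a ∨ c = a

/-- A meet-irreducible element of a partial order. -/
def OrderInfIrred {α : Type*} [PartialOrder α] (a : α) : Prop :=
  ¬ IsMax a ∧ ∀ b c : α, IsGLB {b, c} a → b = a ∨ c = a

namespace ExtremalMOP

variable {n : ℕ} {E : Fin n → Fin n → Prop}

/-- maximal set orthogonal on the left to `Y`. -/
noncomputable def pst (n : ℕ) (E : Fin n → Fin n → Prop) (Y : Finset (Fin n)) :
    Finset (Fin n) :=
  @Finset.filter _ (fun i => i ∉ Y ∧ ∀ k ∈ Y, ¬ E i k)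
    (fun _ => Classical.propDecidable _) Finset.univ

/-- maximal set orthogonal on the right to `X`. -/
noncomputable def qst (n : ℕ) (E : Fin n → Fin n → Prop) (X : Finset (Fin n)) :
    Finset (Fin n) :=
  @Finset.filter _ (fun k => k ∉ X ∧ ∀ i ∈ X, ¬ E i k)
    (fun _ => Classical.propDecidable _) Finset.univ

lemma mem_pst {Y : Finset (Fin n)} {i : Fin n} :
    i ∈ pst n E Y ↔ i ∉ Y ∧ ∀ k ∈ Y, ¬ E i k := by
  have h := @Finset.mem_filter (Fin n) (fun i => i ∉ Y ∧ ∀ k ∈ Y, ¬ E i k)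
      (fun _ => Classical.propDecidable _) Finset.univ i
  rw [pst, h]
  simp

lemma mem_qst {X : Finset (Fin n)} {k : Fin n} :
    k ∈ qst n E X ↔ k ∉ X ∧ ∀ i ∈ X, ¬ E i k := by
  have h := @Finset.mem_filter (Fin n) (fun k => k ∉ X ∧ ∀ i ∈ X, ¬ E i k)
      (fun _ => Classical.propDecidable _) Finset.univ k
  rw [qst, h]
  simp

lemma pst_anti {Y Y' : Finset (Fin n)} (h : Y ⊆ Y') : pst n E Y' ⊆ pst n E Y := by
  intro i hi
  rcases mem_pst.1 hi with ⟨h1, h2⟩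
  exact mem_pst.2 ⟨fun hm => h1 (h hm), fun k hk => h2 k (h hk)⟩

lemma qst_anti {X X' : Finset (Fin n)} (h : X ⊆ X') : qst n E X' ⊆ qst n E X := by
  intro k hk
  rcases mem_qst.1 hk with ⟨h1, h2⟩
  exact mem_qst.2 ⟨fun hm => h1 (h hm), fun i hi => h2 i (h hi)⟩

lemma subset_pq (S : Finset (Fin n)) : S ⊆ pst n E (qst n E S) := by
  intro i hi
  exact mem_pst.2 ⟨fun hm => (mem_qst.1 hm).1 hi, fun k hk => (mem_qst.1 hk).2 i hi⟩

lemma subset_qp (S : Finset (Fin n)) : S ⊆ qst n E (pst n E S) := by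
  intro k hk
  exact mem_qst.2 ⟨fun hm => (mem_pst.1 hm).1 hk, fun i hi => (mem_pst.1 hi).2 k hk⟩

lemma qp_closed (X : Finset (Fin n)) :
    qst n E (pst n E (qst n E X)) = qst n E X :=
  subset_antisymm (qst_anti (subset_pq X)) (subset_qp _)

lemma pq_closed (Y : Finset (Fin n)) :
    pst n E (qst n E (pst n E Y)) = pst n E Y :=
  subset_antisymm (pst_anti (subset_qp Y)) (subset_pq _)

lemma orth_pst (Y : Finset (Fin n)) : Orth n E (pst n E Y) Y :=
  ⟨Finset.disjoint_left.2 fun _ hi => (mem_pst.1 hi).1,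
   fun i hi k hk => (mem_pst.1 hi).2 k hk⟩

lemma orth_qst (X : Finset (Fin n)) : Orth n E X (qst n E X) :=
  ⟨Finset.disjoint_right.2 fun _ hk => (mem_qst.1 hk).1,
   fun i hi k hk => (mem_qst.1 hk).2 i hi⟩

lemma mkMOP {Y : Finset (Fin n)} (hY : qst n E (pst n E Y) = Y) :
    MaxOrth n E (pst n E Y, Y) := by
  refine ⟨orth_pst Y, ?_, ?_⟩
  · intro X' hsub horth
    refine subset_antisymm ?_ hsub
    intro i hi
    exact mem_pst.2 ⟨fun h => Finset.disjoint_left.1 horth.1 hi h,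
      fun k hk => horth.2 i hi k hk⟩
  · intro Y' hsub horth
    refine subset_antisymm ?_ hsub
    intro k hk
    rw [← hY]
    exact mem_qst.2 ⟨fun h => Finset.disjoint_right.1 horth.1 hk h,
      fun i hi => horth.2 i hi k hk⟩

lemma mkMOP' {X : Finset (Fin n)} (hX : pst n E (qst n E X) = X) :
    MaxOrth n E (X, qst n E X) := by
  refine ⟨orth_qst X, ?_, ?_⟩
  · intro X' hsub horth
    refine subset_antisymm ?_ hsub
    intro i hi
    rw [← hX]
    exact mem_pst.2 ⟨fun h => Finset.disjoint_left.1 horth.1 hi h,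
      fun k hk => horth.2 i hi k hk⟩
  · intro Y' hsub horth
    refine subset_antisymm ?_ hsub
    intro k hk
    exact mem_qst.2 ⟨fun h => Finset.disjoint_right.1 horth.1 hk h,
      fun i hi => horth.2 i hi k hk⟩

lemma qst_fst (a : MOP n E) : qst n E a.1.1 = a.1.2 := by
  apply a.2.2.2
  · intro k hk
    exact mem_qst.2 ⟨fun h => Finset.disjoint_right.1 a.2.1.1 hk h,
      fun i hi => a.2.1.2 i hi k hk⟩
  · exact orth_qst _

lemma pst_snd (a : MOP n E) : pst n E a.1.2 = a.1.1 := by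
  apply a.2.2.1
  · intro i hi
    exact mem_pst.2 ⟨fun h => Finset.disjoint_left.1 a.2.1.1 hi h,
      fun k hk => a.2.1.2 i hi k hk⟩
  · exact orth_pst _

lemma snd_closed (a : MOP n E) : qst n E (pst n E a.1.2) = a.1.2 := by
  rw [← qst_fst a, qp_closed]

lemma fst_closed (a : MOP n E) : pst n E (qst n E a.1.1) = a.1.1 := by
  rw [← pst_snd a, pq_closed]

lemma le_iff_snd {a b : MOP n E} : a ≤ b ↔ b.1.2 ⊆ a.1.2 := by
  constructor
  · exact fun h => h.2
  · intro h
    refine ⟨?_, h⟩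
    rw [← pst_snd a, ← pst_snd b]
    exact pst_anti h

lemma le_iff_fst {a b : MOP n E} : a ≤ b ↔ a.1.1 ⊆ b.1.1 := by
  constructor
  · exact fun h => h.1
  · intro h
    refine ⟨h, ?_⟩
    rw [← qst_fst a, ← qst_fst b]
    exact qst_anti h

lemma ext_fst {a b : MOP n E} (h : a.1.1 = b.1.1) : a = b := by
  refine Subtype.ext (Prod.ext h ?_)
  rw [← qst_fst a, ← qst_fst b, h]

lemma ext_snd {a b : MOP n E} (h : a.1.2 = b.1.2) : a = b := by
  refine Subtype.ext (Prod.ext ?_ h)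
  rw [← pst_snd a, ← pst_snd b, h]

lemma closed_inter {Y₁ Y₂ : Finset (Fin n)}
    (h1 : qst n E (pst n E Y₁) = Y₁) (h2 : qst n E (pst n E Y₂) = Y₂) :
    qst n E (pst n E (Y₁ ∩ Y₂)) = Y₁ ∩ Y₂ := by
  refine subset_antisymm (Finset.subset_inter ?_ ?_) (subset_qp _)
  · have h := qst_anti (E := E) (pst_anti (E := E)
      (Finset.inter_subset_left (s₁ := Y₁) (s₂ := Y₂)))
    rwa [h1] at h
  · have h := qst_anti (E := E) (pst_anti (E := E)
      (Finset.inter_subset_right (s₁ := Y₁) (s₂ := Y₂)))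
    rwa [h2] at h

lemma closed_inter' {X₁ X₂ : Finset (Fin n)}
    (h1 : pst n E (qst n E X₁) = X₁) (h2 : pst n E (qst n E X₂) = X₂) :
    pst n E (qst n E (X₁ ∩ X₂)) = X₁ ∩ X₂ := by
  refine subset_antisymm (Finset.subset_inter ?_ ?_) (subset_pq _)
  · have h := pst_anti (E := E) (qst_anti (E := E)
      (Finset.inter_subset_left (s₁ := X₁) (s₂ := X₂)))
    rwa [h1] at h
  · have h := pst_anti (E := E) (qst_anti (E := E)
      (Finset.inter_subset_right (s₁ := X₁) (s₂ := X₂)))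
    rwa [h2] at h

/-- join -/
noncomputable def joinM (a b : MOP n E) : MOP n E :=
  ⟨(pst n E (a.1.2 ∩ b.1.2), a.1.2 ∩ b.1.2),
   mkMOP (closed_inter (snd_closed a) (snd_closed b))⟩

lemma isLUB_joinM (a b : MOP n E) : IsLUB {a, b} (joinM a b) := by
  constructor
  · intro x hx
    rcases hx with rfl | hx
    · exact le_iff_snd.2 Finset.inter_subset_left
    · rw [Set.mem_singleton_iff] at hx
      subst hx
      exact le_iff_snd.2 Finset.inter_subset_right
  · intro u hu
    have h1 := hu (Set.mem_insert a {b})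
    have h2 := hu (Set.mem_insert_of_mem a rfl)
    exact le_iff_snd.2 (Finset.subset_inter (le_iff_snd.1 h1) (le_iff_snd.1 h2))

/-- meet -/
noncomputable def meetM (a b : MOP n E) : MOP n E :=
  ⟨(a.1.1 ∩ b.1.1, qst n E (a.1.1 ∩ b.1.1)),
   mkMOP' (closed_inter' (fst_closed a) (fst_closed b))⟩

lemma isGLB_meetM (a b : MOP n E) : IsGLB {a, b} (meetM a b) := by
  constructor
  · intro x hx
    rcases hx with rfl | hx
    · exact le_iff_fst.2 Finset.inter_subset_left
    · rw [Set.mem_singleton_iff] at hx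
      subst hx
      exact le_iff_fst.2 Finset.inter_subset_right
  · intro u hu
    have h1 := hu (Set.mem_insert a {b})
    have h2 := hu (Set.mem_insert_of_mem a rfl)
    exact le_iff_fst.2 (Finset.subset_inter (le_iff_fst.1 h1) (le_iff_fst.1 h2))

/-- the join-irreducible associated with vertex `v` -/
noncomputable def gam (v : Fin n) : MOP n E :=
  ⟨(pst n E (qst n E {v}), qst n E {v}), mkMOP (qp_closed {v})⟩

/-- the meet-irreducible associated with vertex `v` -/
noncomputable def mu (v : Fin n) : MOP n E :=
  ⟨(pst n E {v}, qst n E (pst n E {v})), mkMOP' (pq_closed {v})⟩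

lemma mem_gam_fst (v : Fin n) : v ∈ (gam (E := E) v).1.1 :=
  subset_pq {v} (Finset.mem_singleton_self v)

lemma notMem_gam_snd (v : Fin n) : v ∉ (gam (E := E) v).1.2 := by
  intro h
  exact (mem_qst.1 h).1 (Finset.mem_singleton_self v)

lemma mem_mu_snd (v : Fin n) : v ∈ (mu (E := E) v).1.2 :=
  subset_qp {v} (Finset.mem_singleton_self v)

lemma notMem_mu_fst (v : Fin n) : v ∉ (mu (E := E) v).1.1 := by
  intro h
  exact (mem_pst.1 h).1 (Finset.mem_singleton_self v)

def botM : MOP n E :=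
  ⟨(∅, Finset.univ), by
    refine ⟨⟨Finset.disjoint_left.2 (by simp), by simp⟩, ?_, ?_⟩
    · intro X' hsub horth
      refine Finset.eq_empty_of_forall_notMem fun i hi => ?_
      exact Finset.disjoint_left.1 horth.1 hi (Finset.mem_univ i)
    · intro Y' hsub _
      exact subset_antisymm (Finset.subset_univ _) hsub⟩

def topM : MOP n E :=
  ⟨(Finset.univ, ∅), by
    refine ⟨⟨Finset.disjoint_right.2 (by simp), by simp⟩, ?_, ?_⟩
    · intro X' hsub _
      exact subset_antisymm (Finset.subset_univ _) hsub
    · intro Y' hsub horth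
      refine Finset.eq_empty_of_forall_notMem fun k hk => ?_
      exact Finset.disjoint_right.1 horth.1 hk (Finset.mem_univ k)⟩

lemma botM_le (a : MOP n E) : botM ≤ a :=
  le_iff_fst.2 (Finset.empty_subset _)

lemma le_topM (a : MOP n E) : a ≤ topM :=
  le_iff_fst.2 (Finset.subset_univ _)

section Irred

variable (hE : ∀ i k, E i k → (k : ℕ) < (i : ℕ))
include hE

lemma gam_key {v : Fin n} {b : MOP n E} (hb : b ≤ gam v) :
    gam (E := E) v ≤ b ∨ v ∈ b.1.2 := by
  by_cases hv1 : v ∈ b.1.1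
  · left
    refine le_iff_snd.2 ?_
    rw [← qst_fst b]
    exact qst_anti (Finset.singleton_subset_iff.2 hv1)
  · right
    by_contra hv2
    have hnq : v ∉ qst n E b.1.1 := by rw [qst_fst b]; exact hv2
    rw [mem_qst] at hnq
    push_neg at hnq
    obtain ⟨x, hx, hEx⟩ := hnq hv1
    have hxg : x ∈ (gam (E := E) v).1.1 := le_iff_fst.1 hb hx
    have hxq : x ∈ qst n E ({v} : Finset (Fin n)) := by
      refine mem_qst.2 ⟨?_, ?_⟩
      · intro h
        rw [Finset.mem_singleton] at h
        subst h
        exact absurd (hE x x hEx) (lt_irrefl _)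
      · intro i hi
        rw [Finset.mem_singleton] at hi
        subst hi
        intro hvx
        have h1 := hE _ _ hvx
        have h2 := hE _ _ hEx
        omega
    exact (mem_pst.1 hxg).1 hxq

lemma mu_key {v : Fin n} {b : MOP n E} (hb : mu v ≤ b) :
    b ≤ mu (E := E) v ∨ v ∈ b.1.1 := by
  by_cases hv1 : v ∈ b.1.2
  · left
    refine le_iff_fst.2 ?_
    rw [← pst_snd b]
    exact pst_anti (Finset.singleton_subset_iff.2 hv1)
  · right
    by_contra hv2
    have hnp : v ∉ pst n E b.1.2 := by rw [pst_snd b]; exact hv2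
    rw [mem_pst] at hnp
    push_neg at hnp
    obtain ⟨y, hy, hEy⟩ := hnp hv1
    have hyg : y ∈ (mu (E := E) v).1.2 := le_iff_snd.1 hb hy
    have hyp : y ∈ pst n E ({v} : Finset (Fin n)) := by
      refine mem_pst.2 ⟨?_, ?_⟩
      · intro h
        rw [Finset.mem_singleton] at h
        subst h
        exact absurd (hE y y hEy) (lt_irrefl _)
      · intro k hk
        rw [Finset.mem_singleton] at hk
        subst hk
        intro hyv
        have h1 := hE _ _ hyv
        have h2 := hE _ _ hEy
        omega
    exact (mem_qst.1 hyg).1 hyp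

lemma gam_supIrred (v : Fin n) : OrderSupIrred (gam (E := E) v) := by
  constructor
  · intro hmin
    have := le_iff_fst.1 (hmin (botM_le (gam v)))
    exact absurd (this (mem_gam_fst v)) (by simp [botM])
  · intro b c hlub
    have heq : gam (E := E) v = joinM b c := hlub.unique (isLUB_joinM b c)
    have hb : b ≤ gam (E := E) v := hlub.1 (Set.mem_insert b {c})
    have hc : c ≤ gam (E := E) v := hlub.1 (Set.mem_insert_of_mem b rfl)
    by_contra hcon
    push_neg at hcon
    have hvb : v ∈ b.1.2 := by
      rcases gam_key hE hb with h | h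
      · exact absurd (le_antisymm hb h) hcon.1
      · exact h
    have hvc : v ∈ c.1.2 := by
      rcases gam_key hE hc with h | h
      · exact absurd (le_antisymm hc h) hcon.2
      · exact h
    have : v ∈ (gam (E := E) v).1.2 := by
      rw [heq]
      exact Finset.mem_inter.2 ⟨hvb, hvc⟩
    exact notMem_gam_snd v this

lemma mu_infIrred (v : Fin n) : OrderInfIrred (mu (E := E) v) := by
  constructor
  · intro hmax
    have := le_iff_snd.1 (hmax (le_topM (mu v)))
    exact absurd (this (mem_mu_snd v)) (by simp [topM])
  · intro b c hglb
    have heq : mu (E := E) v = meetM b c := hglb.unique (isGLB_meetM b c)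
    have hb : mu (E := E) v ≤ b := hglb.1 (Set.mem_insert b {c})
    have hc : mu (E := E) v ≤ c := hglb.1 (Set.mem_insert_of_mem b rfl)
    by_contra hcon
    push_neg at hcon
    have hvb : v ∈ b.1.1 := by
      rcases mu_key hE hb with h | h
      · exact absurd (le_antisymm h hb) hcon.1
      · exact h
    have hvc : v ∈ c.1.1 := by
      rcases mu_key hE hc with h | h
      · exact absurd (le_antisymm h hc) hcon.2
      · exact h
    have : v ∈ (mu (E := E) v).1.1 := by
      rw [heq]
      exact Finset.mem_inter.2 ⟨hvb, hvc⟩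
    exact notMem_mu_fst v this

lemma gam_injective : Function.Injective (gam (n := n) (E := E)) := by
  intro v w h
  by_contra hne
  have hvw : (v : ℕ) ≠ (w : ℕ) := fun hh => hne (Fin.ext hh)
  have key : ∀ x y : Fin n, (x : ℕ) < (y : ℕ) → gam (E := E) x ≠ gam (E := E) y := by
    intro x y hxy hgg
    have h1 : y ∈ (gam (E := E) x).1.2 := by
      refine mem_qst.2 ⟨?_, ?_⟩
      · intro hm
        rw [Finset.mem_singleton] at hm
        subst hm
        exact lt_irrefl _ hxy
      · intro i hi
        rw [Finset.mem_singleton] at hi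
        subst hi
        intro hExy
        have := hE _ _ hExy
        omega
    rw [hgg] at h1
    exact notMem_gam_snd y h1
  rcases hvw.lt_or_gt with hlt | hlt
  · exact key v w hlt h
  · exact key w v hlt h.symm

lemma mu_injective : Function.Injective (mu (n := n) (E := E)) := by
  intro v w h
  by_contra hne
  have hvw : (v : ℕ) ≠ (w : ℕ) := fun hh => hne (Fin.ext hh)
  have key : ∀ x y : Fin n, (x : ℕ) < (y : ℕ) → mu (E := E) x ≠ mu (E := E) y := by
    intro x y hxy hgg
    have h1 : x ∈ (mu (E := E) y).1.1 := by
      refine mem_pst.2 ⟨?_, ?_⟩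
      · intro hm
        rw [Finset.mem_singleton] at hm
        subst hm
        exact lt_irrefl _ hxy
      · intro k hk
        rw [Finset.mem_singleton] at hk
        subst hk
        intro hExy
        have := hE _ _ hExy
        omega
    rw [← hgg] at h1
    exact notMem_mu_fst x h1
  rcases hvw.lt_or_gt with hlt | hlt
  · exact key v w hlt h
  · exact key w v hlt h.symm

end Irred

lemma qst_empty : qst n E ∅ = Finset.univ := by
  ext k
  simp [mem_qst]

lemma pst_empty : pst n E ∅ = Finset.univ := by
  ext i
  simp [mem_pst]

lemma qst_insert (v : Fin n) (T : Finset (Fin n)) :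
    qst n E (insert v T) = qst n E {v} ∩ qst n E T := by
  ext k
  simp only [mem_qst, Finset.mem_inter, Finset.mem_insert, Finset.mem_singleton]
  constructor
  · rintro ⟨h1, h2⟩
    exact ⟨⟨fun h => h1 (Or.inl h), fun i hi => h2 i (Or.inl hi)⟩,
      fun h => h1 (Or.inr h), fun i hi => h2 i (Or.inr hi)⟩
  · rintro ⟨⟨h1, h2⟩, h3, h4⟩
    refine ⟨fun h => ?_, fun i hi => ?_⟩
    · rcases h with h | h
      · exact h1 h
      · exact h3 h
    · rcases hi with hi | hi
      · exact h2 i hi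
      · exact h4 i hi

lemma pst_insert (v : Fin n) (T : Finset (Fin n)) :
    pst n E (insert v T) = pst n E {v} ∩ pst n E T := by
  ext i
  simp only [mem_pst, Finset.mem_inter, Finset.mem_insert, Finset.mem_singleton]
  constructor
  · rintro ⟨h1, h2⟩
    exact ⟨⟨fun h => h1 (Or.inl h), fun k hk => h2 k (Or.inl hk)⟩,
      fun h => h1 (Or.inr h), fun k hk => h2 k (Or.inr hk)⟩
  · rintro ⟨⟨h1, h2⟩, h3, h4⟩
    refine ⟨fun h => ?_, fun k hk => ?_⟩
    · rcases h with h | h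
      · exact h1 h
      · exact h3 h
    · rcases hk with hk | hk
      · exact h2 k hk
      · exact h4 k hk

lemma supIrred_surj {a : MOP n E} (ha : OrderSupIrred a) : ∃ v, gam (E := E) v = a := by
  have key : ∀ T : Finset (Fin n), a.1.2 = qst n E T → ∃ v ∈ T, gam (E := E) v = a := by
    intro T
    induction T using Finset.induction_on with
    | empty =>
      intro h
      rw [qst_empty] at h
      exfalso
      apply ha.1
      intro b _
      refine le_iff_fst.2 ?_
      have : a.1.1 = ∅ := by
        refine Finset.eq_empty_of_forall_notMem fun i hi => ?_
        exact Finset.disjoint_left.1 a.2.1.1 hi (h ▸ Finset.mem_univ i)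
      rw [this]
      exact Finset.empty_subset _
    | @insert v0 T hv0 ih =>
      intro h
      rw [qst_insert] at h
      set m : MOP n E := ⟨(pst n E (qst n E T), qst n E T), mkMOP (qp_closed T)⟩ with hm
      have hlub : IsLUB {gam (E := E) v0, m} a := by
        constructor
        · intro x hx
          rcases hx with rfl | hx
          · exact le_iff_snd.2 (h ▸ Finset.inter_subset_left)
          · rw [Set.mem_singleton_iff] at hx
            subst hx
            exact le_iff_snd.2 (h ▸ Finset.inter_subset_right)
        · intro u hu
          have h1 := le_iff_snd.1 (hu (Set.mem_insert _ _))
          have h2 := le_iff_snd.1 (hu (Set.mem_insert_of_mem _ rfl))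
          exact le_iff_snd.2 (h ▸ Finset.subset_inter h1 h2)
      rcases ha.2 _ _ hlub with h1 | h2
      · exact ⟨v0, Finset.mem_insert_self _ _, h1⟩
      · have : a.1.2 = qst n E T := by rw [← h2]
        obtain ⟨v, hv, hgv⟩ := ih this
        exact ⟨v, Finset.mem_insert_of_mem hv, hgv⟩
  obtain ⟨v, _, hv⟩ := key a.1.1 (qst_fst a).symm
  exact ⟨v, hv⟩

lemma infIrred_surj {a : MOP n E} (ha : OrderInfIrred a) : ∃ v, mu (E := E) v = a := by
  have key : ∀ T : Finset (Fin n), a.1.1 = pst n E T → ∃ v ∈ T, mu (E := E) v = a := by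
    intro T
    induction T using Finset.induction_on with
    | empty =>
      intro h
      rw [pst_empty] at h
      exfalso
      apply ha.1
      intro b _
      refine le_iff_snd.2 ?_
      have : a.1.2 = ∅ := by
        refine Finset.eq_empty_of_forall_notMem fun k hk => ?_
        exact Finset.disjoint_right.1 a.2.1.1 hk (h ▸ Finset.mem_univ k)
      rw [this]
      exact Finset.empty_subset _
    | @insert v0 T hv0 ih =>
      intro h
      rw [pst_insert] at h
      set m : MOP n E := ⟨(pst n E T, qst n E (pst n E T)), mkMOP' (pq_closed T)⟩ with hm
      have hglb : IsGLB {mu (E := E) v0, m} a := by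
        constructor
        · intro x hx
          rcases hx with rfl | hx
          · exact le_iff_fst.2 (h ▸ Finset.inter_subset_left)
          · rw [Set.mem_singleton_iff] at hx
            subst hx
            exact le_iff_fst.2 (h ▸ Finset.inter_subset_right)
        · intro u hu
          have h1 := le_iff_fst.1 (hu (Set.mem_insert _ _))
          have h2 := le_iff_fst.1 (hu (Set.mem_insert_of_mem _ rfl))
          exact le_iff_fst.2 (h ▸ Finset.subset_inter h1 h2)
      rcases ha.2 _ _ hglb with h1 | h2
      · exact ⟨v0, Finset.mem_insert_self _ _, h1⟩
      · have : a.1.1 = pst n E T := by rw [← h2]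
        obtain ⟨v, hv, hgv⟩ := ih this
        exact ⟨v, Finset.mem_insert_of_mem hv, hgv⟩
  obtain ⟨v, _, hv⟩ := key a.1.2 (pst_snd a).symm
  exact ⟨v, hv⟩

/-- the canonical chain -/
def chainEl (hE : ∀ i k, E i k → (k : ℕ) < (i : ℕ)) (j : Fin (n + 1)) : MOP n E :=
  ⟨(Finset.univ.filter (fun i => (i : ℕ) < (j : ℕ)),
    Finset.univ.filter (fun i => (j : ℕ) ≤ (i : ℕ))), by
    refine ⟨⟨Finset.disjoint_left.2 ?_, ?_⟩, ?_, ?_⟩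
    · intro i hi hi2
      simp only [Finset.mem_filter, Finset.mem_univ, true_and] at hi hi2
      omega
    · intro i hi k hk hEik
      simp only [Finset.mem_filter, Finset.mem_univ, true_and] at hi hk
      have := hE _ _ hEik
      omega
    · intro X' hsub horth
      refine subset_antisymm ?_ hsub
      intro i hi
      simp only [Finset.mem_filter, Finset.mem_univ, true_and]
      by_contra hlt
      push_neg at hlt
      exact Finset.disjoint_left.1 horth.1 hi
        (by simp only [Finset.mem_filter, Finset.mem_univ, true_and]; omega)
    · intro Y' hsub horth
      refine subset_antisymm ?_ hsub
      intro k hk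
      simp only [Finset.mem_filter, Finset.mem_univ, true_and]
      by_contra hlt
      push_neg at hlt
      exact Finset.disjoint_right.1 horth.1 hk
        (by simp only [Finset.mem_filter, Finset.mem_univ, true_and]; omega)⟩

lemma chainEl_strictMono (hE : ∀ i k, E i k → (k : ℕ) < (i : ℕ)) :
    StrictMono (chainEl (n := n) (E := E) hE) := by
  intro j j' hjj
  have hvv : (j : ℕ) < (j' : ℕ) := hjj
  rw [lt_iff_le_and_ne]
  constructor
  · refine le_iff_fst.2 ?_
    intro i hi
    simp only [chainEl, Finset.mem_filter, Finset.mem_univ, true_and] at hi ⊢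
    omega
  · intro heq
    have hjn : (j : ℕ) < n := by
      have := j'.isLt
      omega
    set w : Fin n := ⟨(j : ℕ), hjn⟩ with hw
    have h1 : w ∈ (chainEl (n := n) (E := E) hE j').1.1 := by
      simp only [chainEl, Finset.mem_filter, Finset.mem_univ, true_and, hw]
      exact hvv
    rw [← heq] at h1
    simp only [chainEl, Finset.mem_filter, Finset.mem_univ, true_and, hw] at h1
    omega

lemma lt_ssubset {a b : MOP n E} (h : a < b) : a.1.1 ⊂ b.1.1 := by
  refine Finset.ssubset_iff_subset_ne.2 ⟨le_iff_fst.1 h.le, ?_⟩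
  intro heq
  exact h.ne (ext_fst heq)

lemma chain_bound (m : ℕ) (c : Fin (m + 1) → MOP n E) (hc : StrictMono c) : m ≤ n := by
  have hcard : ∀ k, ∀ hk : k ≤ m, k ≤ ((c ⟨k, Nat.lt_succ_of_le hk⟩).1.1).card := by
    intro k
    induction k with
    | zero => intro hk; exact Nat.zero_le _
    | succ k ih =>
      intro hk
      have hk' : k ≤ m := Nat.le_of_succ_le hk
      have h1 := ih hk'
      have hlt : c ⟨k, Nat.lt_succ_of_le hk'⟩ < c ⟨k + 1, Nat.lt_succ_of_le hk⟩ :=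
        hc (by simp [Fin.mk_lt_mk])
      have h2 := Finset.card_lt_card (lt_ssubset hlt)
      omega
  have h1 := hcard m le_rfl
  have h2 : ((c ⟨m, Nat.lt_succ_of_le le_rfl⟩).1.1).card ≤ n := by
    have := Finset.card_le_univ ((c ⟨m, Nat.lt_succ_of_le le_rfl⟩).1.1)
    simpa using this
  omega

end ExtremalMOP

open ExtremalMOP

/-- Given a directed graph on `[n]` (no multiple edges, every edge going from a
larger to a smaller vertex), the maximal orthogonal pairs, ordered by inclusion
of first components (equivalently, reverse inclusion of second components), form
a lattice, with joins computed by intersecting second components and meets by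
intersecting first components; this lattice is extremal of length `n`. -/
theorem maxOrthogonalPairs_extremal_lattice (n : ℕ) (E : Fin n → Fin n → Prop)
    (hE : ∀ i k, E i k → (k : ℕ) < (i : ℕ)) :
    (∀ a b : MOP n E, a ≤ b ↔ a.1.1 ⊆ b.1.1) ∧
    (∀ a b : MOP n E, a ≤ b ↔ b.1.2 ⊆ a.1.2) ∧
    (∀ a b : MOP n E, ∃ s : MOP n E, IsLUB {a, b} s ∧ s.1.2 = a.1.2 ∩ b.1.2) ∧
    (∀ a b : MOP n E, ∃ s : MOP n E, IsGLB {a, b} s ∧ s.1.1 = a.1.1 ∩ b.1.1) ∧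
    (∃ c : Fin (n + 1) → MOP n E, StrictMono c) ∧
    (∀ (m : ℕ) (c : Fin (m + 1) → MOP n E), StrictMono c → m ≤ n) ∧
    Nat.card {a : MOP n E // OrderSupIrred a} = n ∧
    Nat.card {a : MOP n E // OrderInfIrred a} = n := by
  refine ⟨fun a b => le_iff_fst, fun a b => le_iff_snd,
    fun a b => ⟨joinM a b, isLUB_joinM a b, rfl⟩,
    fun a b => ⟨meetM a b, isGLB_meetM a b, rfl⟩,
    ⟨chainEl hE, chainEl_strictMono hE⟩,
    chain_bound, ?_, ?_⟩
  · have hbij : Function.Bijective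
        (fun v : Fin n => (⟨gam (E := E) v, gam_supIrred hE v⟩ :
          {a : MOP n E // OrderSupIrred a})) := by
      constructor
      · intro v w h
        exact gam_injective hE (congrArg Subtype.val h)
      · rintro ⟨a, ha⟩
        obtain ⟨v, hv⟩ := supIrred_surj ha
        exact ⟨v, Subtype.ext hv⟩
    rw [← Nat.card_eq_of_bijective _ hbij, Nat.card_eq_fintype_card, Fintype.card_fin]
  · have hbij : Function.Bijective
        (fun v : Fin n => (⟨mu (E := E) v, mu_infIrred hE v⟩ :
          {a : MOP n E // OrderInfIrred a})) := by
      constructor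
      · intro v w h
        exact mu_injective hE (congrArg Subtype.val h)
      · rintro ⟨a, ha⟩
        obtain ⟨v, hv⟩ := infIrred_surj ha
        exact ⟨v, Subtype.ext hv⟩
    rw [← Nat.card_eq_of_bijective _ hbij, Nat.card_eq_fintype_card, Fintype.card_fin]
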